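/- The Ricci tensor of the Mrugala metric G has components R_{00} = −n/2, R_{0 p_i} = 0, R_{0 x^i} = −(n/2) p_i, R_{p_i p_j} = 0, R_{p_i x^j} = ½ δ_{ij}, R_{x^i x^j} = −(n/2) p_i p_j (in the block ordering (x^0; p; x)), and the scalar curvature of G is the constant 𝓡(G) = n/2. -/

import Mathlib

/-!
Statement 5: The Ricci tensor of the Mrugala metric `G` has components
`R_{00} = -n/2`, `R_{0p_i} = 0`, `R_{0x^i} = -(n/2) p_i`, `R_{p_i p_j} = 0`,
`R_{p_i x^j} = ½ δ_{ij}`, `R_{x^i x^j} = -(n/2) p_i p_j`, and the scalar curvature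
is the constant `n/2`.
-/

abbrev Idx (n : ℕ) : Type := Unit ⊕ (Fin n ⊕ Fin n)
abbrev Pt (n : ℕ) : Type := Idx n → ℝ

/-- The Mrugala metric `G = [[1, 0, pᵀ], [0, 0ₙ, Iₙ], [p, Iₙ, p pᵀ]]`. -/
def Gmat (n : ℕ) (m : Pt n) : Matrix (Idx n) (Idx n) ℝ :=
  Matrix.of fun a b =>
    match a, b with
    | Sum.inl _, Sum.inl _ => 1
    | Sum.inl _, Sum.inr (Sum.inl _) => 0
    | Sum.inl _, Sum.inr (Sum.inr j) => m (Sum.inr (Sum.inl j))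
    | Sum.inr (Sum.inl _), Sum.inl _ => 0
    | Sum.inr (Sum.inl _), Sum.inr (Sum.inl _) => 0
    | Sum.inr (Sum.inl i), Sum.inr (Sum.inr j) => if i = j then 1 else 0
    | Sum.inr (Sum.inr i), Sum.inl _ => m (Sum.inr (Sum.inl i))
    | Sum.inr (Sum.inr i), Sum.inr (Sum.inl j) => if i = j then 1 else 0
    | Sum.inr (Sum.inr i), Sum.inr (Sum.inr j) =>
        m (Sum.inr (Sum.inl i)) * m (Sum.inr (Sum.inl j))

/-- Partial derivative `∂_a f (m)` of a scalar function on `P`. -/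
noncomputable def pd {n : ℕ} (f : Pt n → ℝ) (m : Pt n) (a : Idx n) : ℝ :=
  fderiv ℝ f m (Pi.single a 1)

open Sum

lemma hasFDerivAt_coord {n : ℕ} (m : Pt n) (d : Idx n) :
    HasFDerivAt (fun m' : Pt n => m' d) (ContinuousLinearMap.proj d : Pt n →L[ℝ] ℝ) m := by
  show HasFDerivAt (⇑(ContinuousLinearMap.proj d : Pt n →L[ℝ] ℝ)) _ m
  exact (ContinuousLinearMap.proj d : Pt n →L[ℝ] ℝ).hasFDerivAt

lemma pd_poly {n : ℕ} (m : Pt n) (c0 c1 c2 c3 : ℝ) (d1 d2 e1 e2 a : Idx n) :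
    pd (fun m' => c0 + c1 * m' d1 + c2 * m' d2 + c3 * (m' e1 * m' e2)) m a =
      c1 * (if d1 = a then 1 else 0) + c2 * (if d2 = a then 1 else 0)
        + c3 * ((if e1 = a then 1 else 0) * m e2 + m e1 * (if e2 = a then 1 else 0)) := by
  have h : HasFDerivAt (fun m' : Pt n => c0 + c1 * m' d1 + c2 * m' d2 + c3 * (m' e1 * m' e2))
      ((c1 • (ContinuousLinearMap.proj d1 : Pt n →L[ℝ] ℝ))
        + (c2 • (ContinuousLinearMap.proj d2 : Pt n →L[ℝ] ℝ))
        + (c3 • (m e1 • (ContinuousLinearMap.proj e2 : Pt n →L[ℝ] ℝ)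
            + m e2 • (ContinuousLinearMap.proj e1 : Pt n →L[ℝ] ℝ)))) m := by
    have h1 := (hasFDerivAt_coord m d1).const_mul c1
    have h2 := (hasFDerivAt_coord m d2).const_mul c2
    have h3 := ((hasFDerivAt_coord m e1).mul (hasFDerivAt_coord m e2)).const_mul c3
    have := ((h1.const_add c0).add h2).add h3
    exact this
  rw [pd, h.fderiv]
  simp only [ContinuousLinearMap.add_apply, ContinuousLinearMap.coe_smul', Pi.smul_apply,
    ContinuousLinearMap.proj_apply, Pi.single_apply, smul_eq_mul]
  split_ifs <;> ring

noncomputable def Hmat (n : ℕ) (m : Pt n) : Matrix (Idx n) (Idx n) ℝ :=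
  Matrix.of fun a b =>
    match a, b with
    | Sum.inl _, Sum.inl _ => 1
    | Sum.inl _, Sum.inr (Sum.inl j) => -(m (Sum.inr (Sum.inl j)))
    | Sum.inl _, Sum.inr (Sum.inr _) => 0
    | Sum.inr (Sum.inl i), Sum.inl _ => -(m (Sum.inr (Sum.inl i)))
    | Sum.inr (Sum.inl _), Sum.inr (Sum.inl _) => 0
    | Sum.inr (Sum.inl i), Sum.inr (Sum.inr j) => if i = j then 1 else 0
    | Sum.inr (Sum.inr _), Sum.inl _ => 0
    | Sum.inr (Sum.inr i), Sum.inr (Sum.inl j) => if i = j then 1 else 0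
    | Sum.inr (Sum.inr _), Sum.inr (Sum.inr _) => 0

lemma Gmat_mul_Hmat (n : ℕ) (m : Pt n) : Gmat n m * Hmat n m = 1 := by
  ext a b
  rcases a with _ | a | a <;> rcases b with _ | b | b <;>
    simp [Matrix.mul_apply, Gmat, Hmat, Fintype.sum_sum_type, Matrix.one_apply,
      mul_ite, ite_mul, Finset.sum_ite_eq, Finset.sum_ite_eq', mul_comm]

lemma Gmat_inv (n : ℕ) (m : Pt n) : (Gmat n m)⁻¹ = Hmat n m :=
  Matrix.inv_eq_right_inv (Gmat_mul_Hmat n m)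

/-- Christoffel symbols `Γ^α_{βγ} = ½ Σ_s G^{αs}(∂_β G_{γs} + ∂_γ G_{βs} - ∂_s G_{βγ})`. -/
noncomputable def Christoffel (n : ℕ) (m : Pt n) (α β γ : Idx n) : ℝ :=
  (1 / 2) * ∑ s, (Gmat n m)⁻¹ α s *
    (pd (fun m' => Gmat n m' γ s) m β + pd (fun m' => Gmat n m' β s) m γ
      - pd (fun m' => Gmat n m' β γ) m s)

lemma pd_congr {n : ℕ} {f g : Pt n → ℝ} (h : ∀ x, f x = g x) (m : Pt n) (a : Idx n) :
    pd f m a = pd g m a := by rw [show f = g from funext h]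

lemma pd_const {n : ℕ} (m : Pt n) (c : ℝ) (a : Idx n) : pd (fun _ : Pt n => c) m a = 0 := by
  rw [pd_congr (g := fun m' : Pt n => c + 0 * m' a + 0 * m' a + 0 * (m' a * m' a))
    (fun x => by ring) m a, pd_poly]; ring

lemma pd_coord {n : ℕ} (m : Pt n) (d a : Idx n) :
    pd (fun m' : Pt n => m' d) m a = if d = a then 1 else 0 := by
  rw [pd_congr (g := fun m' : Pt n => 0 + 1 * m' d + 0 * m' d + 0 * (m' d * m' d))
    (fun x => by ring) m a, pd_poly]; ring

lemma pd_cmul {n : ℕ} (m : Pt n) (c : ℝ) (d a : Idx n) :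
    pd (fun m' : Pt n => c * m' d) m a = c * (if d = a then 1 else 0) := by
  rw [pd_congr (g := fun m' : Pt n => 0 + c * m' d + 0 * m' d + 0 * (m' d * m' d))
    (fun x => by ring) m a, pd_poly]; ring

lemma pd_mul {n : ℕ} (m : Pt n) (e1 e2 a : Idx n) :
    pd (fun m' : Pt n => m' e1 * m' e2) m a =
      (if e1 = a then 1 else 0) * m e2 + m e1 * (if e2 = a then 1 else 0) := by
  rw [pd_congr (g := fun m' : Pt n => 0 + 0 * m' e1 + 0 * m' e1 + 1 * (m' e1 * m' e2))
    (fun x => by ring) m a, pd_poly]; ring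

lemma pd_two {n : ℕ} (m : Pt n) (c1 c2 : ℝ) (d1 d2 a : Idx n) :
    pd (fun m' : Pt n => c1 * m' d1 + c2 * m' d2) m a =
      c1 * (if d1 = a then 1 else 0) + c2 * (if d2 = a then 1 else 0) := by
  rw [pd_congr (g := fun m' : Pt n => 0 + c1 * m' d1 + c2 * m' d2 + 0 * (m' d1 * m' d2))
    (fun x => by ring) m a, pd_poly]; ring

/-- Derivative of the metric entries. -/
noncomputable def dG (n : ℕ) (m : Pt n) (a b c : Idx n) : ℝ :=
  match a, b with
  | Sum.inl _, Sum.inr (Sum.inr j) => if (inr (inl j) : Idx n) = c then 1 else 0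
  | Sum.inr (Sum.inr i), Sum.inl _ => if (inr (inl i) : Idx n) = c then 1 else 0
  | Sum.inr (Sum.inr i), Sum.inr (Sum.inr j) =>
      (if (inr (inl i) : Idx n) = c then 1 else 0) * m (inr (inl j))
        + m (inr (inl i)) * (if (inr (inl j) : Idx n) = c then 1 else 0)
  | _, _ => 0

lemma pd_G {n : ℕ} (m : Pt n) (a b c : Idx n) :
    pd (fun m' => Gmat n m' a b) m c = dG n m a b c := by
  rcases a with _ | a | a <;> rcases b with _ | b | b <;>
    first
      | exact pd_const m _ c
      | exact pd_coord m _ c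
      | exact pd_mul m _ _ c

noncomputable def Gam (n : ℕ) (m : Pt n) (α β γ : Idx n) : ℝ :=
  match α, β, γ with
  | Sum.inl _, Sum.inl _, Sum.inr (Sum.inr i) => (1/2 : ℝ) * m (inr (inl i))
  | Sum.inl _, Sum.inr (Sum.inr i), Sum.inl _ => (1/2 : ℝ) * m (inr (inl i))
  | Sum.inl _, Sum.inr (Sum.inl k), Sum.inr (Sum.inr i) => if k = i then (1/2 : ℝ) else 0
  | Sum.inl _, Sum.inr (Sum.inr i), Sum.inr (Sum.inl k) => if k = i then (1/2 : ℝ) else 0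
  | Sum.inl _, Sum.inr (Sum.inr i), Sum.inr (Sum.inr j) => m (inr (inl i)) * m (inr (inl j))
  | Sum.inr (Sum.inl k), Sum.inr (Sum.inl j), Sum.inl _ => if j = k then (1/2 : ℝ) else 0
  | Sum.inr (Sum.inl k), Sum.inl _, Sum.inr (Sum.inl j) => if j = k then (1/2 : ℝ) else 0
  | Sum.inr (Sum.inl k), Sum.inr (Sum.inl j), Sum.inr (Sum.inr i) =>
      (if j = k then (1/2 : ℝ) else 0) * m (inr (inl i))
  | Sum.inr (Sum.inl k), Sum.inr (Sum.inr i), Sum.inr (Sum.inl j) =>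
      (if j = k then (1/2 : ℝ) else 0) * m (inr (inl i))
  | Sum.inr (Sum.inr k), Sum.inl _, Sum.inr (Sum.inr i) => if k = i then -(1/2 : ℝ) else 0
  | Sum.inr (Sum.inr k), Sum.inr (Sum.inr i), Sum.inl _ => if k = i then -(1/2 : ℝ) else 0
  | Sum.inr (Sum.inr k), Sum.inr (Sum.inr i), Sum.inr (Sum.inr j) =>
      (if k = i then -(1/2 : ℝ) else 0) * m (inr (inl j))
        + (if k = j then -(1/2 : ℝ) else 0) * m (inr (inl i))
  | _, _, _ => 0

set_option maxRecDepth 10000 in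
set_option maxHeartbeats 1000000 in
lemma christoffel_eq (n : ℕ) (m : Pt n) (α β γ : Idx n) :
    Christoffel n m α β γ = Gam n m α β γ := by
  rw [Christoffel, Gmat_inv]
  simp only [pd_G]
  rcases α with _ | a | a <;> rcases β with _ | b | b <;> rcases γ with _ | c | c <;>
    simp [Hmat, dG, Gam, Fintype.sum_sum_type, mul_ite, ite_mul, mul_add, add_mul,
      Finset.sum_ite_eq, Finset.sum_ite_eq', Finset.sum_add_distrib] <;>
    (try (split_ifs <;> (try subst_vars) <;> (try simp_all))) <;> (try ring)

/-- Derivative of the closed-form Christoffel symbols. -/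
noncomputable def dGam (n : ℕ) (m : Pt n) (α β γ c : Idx n) : ℝ :=
  match α, β, γ with
  | Sum.inl _, Sum.inl _, Sum.inr (Sum.inr i) =>
      (1/2 : ℝ) * (if (inr (inl i) : Idx n) = c then 1 else 0)
  | Sum.inl _, Sum.inr (Sum.inr i), Sum.inl _ =>
      (1/2 : ℝ) * (if (inr (inl i) : Idx n) = c then 1 else 0)
  | Sum.inl _, Sum.inr (Sum.inr i), Sum.inr (Sum.inr j) =>
      (if (inr (inl i) : Idx n) = c then 1 else 0) * m (inr (inl j))
        + m (inr (inl i)) * (if (inr (inl j) : Idx n) = c then 1 else 0)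
  | Sum.inr (Sum.inl k), Sum.inr (Sum.inl j), Sum.inr (Sum.inr i) =>
      (if j = k then (1/2 : ℝ) else 0) * (if (inr (inl i) : Idx n) = c then 1 else 0)
  | Sum.inr (Sum.inl k), Sum.inr (Sum.inr i), Sum.inr (Sum.inl j) =>
      (if j = k then (1/2 : ℝ) else 0) * (if (inr (inl i) : Idx n) = c then 1 else 0)
  | Sum.inr (Sum.inr k), Sum.inr (Sum.inr i), Sum.inr (Sum.inr j) =>
      (if k = i then -(1/2 : ℝ) else 0) * (if (inr (inl j) : Idx n) = c then 1 else 0)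
        + (if k = j then -(1/2 : ℝ) else 0) * (if (inr (inl i) : Idx n) = c then 1 else 0)
  | _, _, _ => 0

lemma pd_Gam {n : ℕ} (m : Pt n) (α β γ c : Idx n) :
    pd (fun m' => Gam n m' α β γ) m c = dGam n m α β γ c := by
  rcases α with _ | a | a <;> rcases β with _ | b | b <;> rcases γ with _ | g | g <;>
    first
      | exact pd_const m _ c
      | exact pd_cmul m _ _ c
      | exact pd_mul m _ _ c
      | exact pd_two m _ _ _ _ c

lemma pd_Christoffel {n : ℕ} (m : Pt n) (α β γ c : Idx n) :
    pd (fun m' => Christoffel n m' α β γ) m c = dGam n m α β γ c := by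
  rw [pd_congr (fun m' => christoffel_eq n m' α β γ) m c, pd_Gam]

/-- The Ricci tensor
`R_{αβ} = ∂_μ Γ^μ_{βα} - ∂_β Γ^μ_{μα} + Γ^μ_{μγ}Γ^γ_{βα} - Γ^μ_{βγ}Γ^γ_{μα}`. -/
noncomputable def RicciT (n : ℕ) (m : Pt n) (α β : Idx n) : ℝ :=
  (∑ μ, pd (fun m' => Christoffel n m' μ β α) m μ)
    - (∑ μ, pd (fun m' => Christoffel n m' μ μ α) m β)
    + (∑ μ, ∑ γ, Christoffel n m μ μ γ * Christoffel n m γ β α)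
    - (∑ μ, ∑ γ, Christoffel n m μ β γ * Christoffel n m γ μ α)

noncomputable def RicF (n : ℕ) (m : Pt n) (α β : Idx n) : ℝ :=
  match α, β with
  | Sum.inl _, Sum.inl _ => -((n : ℝ)/2)
  | Sum.inl _, Sum.inr (Sum.inr i) => -((n : ℝ)/2) * m (inr (inl i))
  | Sum.inr (Sum.inr i), Sum.inl _ => -((n : ℝ)/2) * m (inr (inl i))
  | Sum.inr (Sum.inl i), Sum.inr (Sum.inr j) => if i = j then (1/2 : ℝ) else 0
  | Sum.inr (Sum.inr j), Sum.inr (Sum.inl i) => if i = j then (1/2 : ℝ) else 0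
  | Sum.inr (Sum.inr i), Sum.inr (Sum.inr j) => -((n : ℝ)/2) * (m (inr (inl i)) * m (inr (inl j)))
  | _, _ => 0

set_option maxHeartbeats 2000000 in
lemma ricci_eq (n : ℕ) (m : Pt n) (α β : Idx n) :
    RicciT n m α β = RicF n m α β := by
  rw [RicciT]
  simp only [pd_Christoffel]
  simp only [christoffel_eq]
  rcases α with _ | a | a <;> rcases β with _ | b | b <;>
    simp [Gam, dGam, RicF, Fintype.sum_sum_type, mul_ite, ite_mul, mul_add, add_mul,
      Finset.sum_ite_eq, Finset.sum_ite_eq', Finset.sum_add_distrib, Finset.sum_sub_distrib,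
      Finset.sum_const, nsmul_eq_mul] <;>
    (try (split_ifs <;> (try simp_all))) <;> (try ring)

/-- The scalar curvature `𝓡 = Σ G^{αβ} R_{βα}`. -/
noncomputable def scalarCurv (n : ℕ) (m : Pt n) : ℝ :=
  ∑ α, ∑ β, (Gmat n m)⁻¹ α β * RicciT n m β α

set_option maxHeartbeats 1000000 in
lemma scalar_eq (n : ℕ) (m : Pt n) : scalarCurv n m = (n / 2 : ℝ) := by
  rw [scalarCurv, Gmat_inv]
  simp only [ricci_eq]
  simp [Hmat, RicF, Fintype.sum_sum_type, mul_ite, ite_mul, mul_add, add_mul,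
    Finset.sum_ite_eq, Finset.sum_ite_eq', Finset.sum_add_distrib, Finset.sum_sub_distrib,
    Finset.sum_const, nsmul_eq_mul]
  ring

theorem mrugala_ricci_scalar (n : ℕ) (hn : 1 ≤ n) (m : Pt n) (i j : Fin n) :
    RicciT n m (Sum.inl ()) (Sum.inl ()) = -(n / 2 : ℝ) ∧
    RicciT n m (Sum.inl ()) (Sum.inr (Sum.inl i)) = 0 ∧
    RicciT n m (Sum.inl ()) (Sum.inr (Sum.inr i)) =
      -(n / 2 : ℝ) * m (Sum.inr (Sum.inl i)) ∧
    RicciT n m (Sum.inr (Sum.inl i)) (Sum.inr (Sum.inl j)) = 0 ∧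
    RicciT n m (Sum.inr (Sum.inl i)) (Sum.inr (Sum.inr j)) =
      (1 / 2 : ℝ) * (if i = j then 1 else 0) ∧
    RicciT n m (Sum.inr (Sum.inr i)) (Sum.inr (Sum.inr j)) =
      -(n / 2 : ℝ) * (m (Sum.inr (Sum.inl i)) * m (Sum.inr (Sum.inl j))) ∧
    scalarCurv n m = (n / 2 : ℝ) := by
  refine ⟨?_, ?_, ?_, ?_, ?_, ?_, scalar_eq n m⟩ <;> rw [ricci_eq] <;>
    simp [RicF] <;> (try (split_ifs <;> ring))
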